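/- Let x be a solution to the WDTAP set-covering LP, σ a splitting of L, and x' = split(x, σ). Then for every vertex v, every arc visible to v with respect to supp(x') is also visible to v with respect to supp(x). Consequently, the visible up-width and visible down-width of every vertex with respect to supp(x') is at most its visible up-width and down-width with respect to supp(x). -/
import Mathlib


open scoped Classical

/-- A tree on vertex set `V`, rooted at `root`, encoded via the parent function.
Every non-root vertex `z` corresponds to the unique tree edge/arc `a_z` between
`z` and `parent z`. -/
structure ArcTree (V : Type*) where
  root : V
  parent : V → V
  parent_root : parent root = root
  reaches_root : ∀ v : V, ∃ n : ℕ, parent^[n] v = root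

namespace ArcTree

variable {V : Type*}

/-- `x` is an ancestor of `y` (possibly `x = y`). -/
def anc (T : ArcTree V) (x y : V) : Prop := ∃ n : ℕ, T.parent^[n] y = x

/-- The arc `a_z` (between `z` and `parent z`, for `z ≠ root`) lies on the
tree path between `u` and `v`. -/
def arcOnPath (T : ArcTree V) (u v z : V) : Prop :=
  z ≠ T.root ∧ ¬ (T.anc z u ↔ T.anc z v)

/-- The vertex `x` lies on the tree path between `u` and `v`. -/
def onPath (T : ArcTree V) (u v x : V) : Prop :=
  (T.anc x u ∨ T.anc x v) ∧ ∀ z, T.anc z u → T.anc z v → T.anc z x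

/-- `x` is an inner vertex of the tree path between `u` and `v`. -/
def innerOnPath (T : ArcTree V) (u v x : V) : Prop :=
  T.onPath u v x ∧ x ≠ u ∧ x ≠ v

/-- `w` is the least common ancestor of `u` and `v`. -/
def isLca (T : ArcTree V) (u v w : V) : Prop :=
  T.anc w u ∧ T.anc w v ∧ ∀ z, T.anc z u → T.anc z v → T.anc z w

end ArcTree

section Cover

variable {V : Type*}

/- Orientation convention: `up z = true` means the arc `a_z` is directed from `z` to
`parent z` (an up-arc, pointing towards the root); `up z = false` means it is directed
from `parent z` to `z` (a down-arc). -/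

/-- The directed link `ℓ = (u, v)` covers the arc `a_z`, i.e. `a_z` is a backward arc
of the tree path from `u` to `v` (equivalently, the walk from `v` back to `u`
traverses `a_z` in its forward direction). -/
def covers (T : ArcTree V) (up : V → Bool) (ℓ : V × V) (z : V) : Prop :=
  z ≠ T.root ∧
    ((T.anc z ℓ.2 ∧ ¬ T.anc z ℓ.1 ∧ up z = true) ∨
     (T.anc z ℓ.1 ∧ ¬ T.anc z ℓ.2 ∧ up z = false))

/-- The link `ℓ = (u,v)` covers the arc `a_z` in the wrong direction, i.e. `a_z` is a
forward arc of the tree path from `u` to `v`. -/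
def wcovers (T : ArcTree V) (up : V → Bool) (ℓ : V × V) (z : V) : Prop :=
  z ≠ T.root ∧
    ((T.anc z ℓ.1 ∧ ¬ T.anc z ℓ.2 ∧ up z = true) ∨
     (T.anc z ℓ.2 ∧ ¬ T.anc z ℓ.1 ∧ up z = false))

/-- `ℓ'` is a shadow of `ℓ`: the endpoints of `ℓ'` lie, in this order, on the tree path
of `ℓ`. -/
def IsShadow (T : ArcTree V) (ℓ ℓ' : V × V) : Prop :=
  T.onPath ℓ.1 ℓ.2 ℓ'.1 ∧ T.onPath ℓ'.1 ℓ.2 ℓ'.2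

/-- `x` is an inner vertex of the path of the generic shadow of `ℓ` (the minimal shadow
with the same directed coverage): `x` lies on `P_ℓ` and `ℓ` covers arcs on both sides
of `x`. -/
def innerGeneric (T : ArcTree V) (up : V → Bool) (ℓ : V × V) (x : V) : Prop :=
  T.onPath ℓ.1 ℓ.2 x ∧
    (∃ z, covers T up ℓ z ∧ T.arcOnPath ℓ.1 x z) ∧
    (∃ z, covers T up ℓ z ∧ T.arcOnPath x ℓ.2 z)

/-- The arc `a_z` (lying in the subtree of `v`) is visible to `v` with respect to the
link set `L'`. -/
def visibleArc (T : ArcTree V) (up : V → Bool) (L' : Set (V × V)) (v z : V) : Prop :=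
  T.anc v z ∧ z ≠ v ∧ ∃ ℓ ∈ L', covers T up ℓ z ∧ innerGeneric T up ℓ v

/-- A set of arcs (encoded by their lower endpoints) is ancestor-free: no arc of the
set lies on the path from another arc's apex (top endpoint) to the root. -/
def AncestorFree (T : ArcTree V) (S : Set V) : Prop :=
  ∀ z ∈ S, ∀ z' ∈ S, z ≠ z' → ¬ T.anc z' (T.parent z)

/-- The visible up-width of `v` w.r.t. the link set `L'` is at most `k`. -/
def upWidthLE (T : ArcTree V) (up : V → Bool) (L' : Set (V × V)) (v : V) (k : ℕ) : Prop :=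
  ∀ S : Finset V, AncestorFree T (S : Set V) →
    (∀ z ∈ S, up z = true ∧ visibleArc T up L' v z) → S.card ≤ k

/-- The visible down-width of `v` w.r.t. the link set `L'` is at most `k`. -/
def downWidthLE (T : ArcTree V) (up : V → Bool) (L' : Set (V × V)) (v : V) (k : ℕ) : Prop :=
  ∀ S : Finset V, AncestorFree T (S : Set V) →
    (∀ z ∈ S, up z = false ∧ visibleArc T up L' v z) → S.card ≤ k

/-- The link `ℓ` points into the subtree `T_v`. -/
def pointsInto (T : ArcTree V) (v : V) (ℓ : V × V) : Prop :=
  T.anc v ℓ.2 ∧ ℓ.2 ≠ v ∧ ¬ T.anc v ℓ.1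

/-- The link `ℓ` points out of the subtree `T_v`. -/
def pointsOut (T : ArcTree V) (v : V) (ℓ : V × V) : Prop :=
  T.anc v ℓ.1 ∧ ℓ.1 ≠ v ∧ ¬ T.anc v ℓ.2

/-- `v` is up-independent w.r.t. the link set `L'`: every link either covers no up-arc
of the subtree `T_v`, or its whole coverage lies inside `T_v`. -/
def upIndep (T : ArcTree V) (up : V → Bool) (L' : Set (V × V)) (v : V) : Prop :=
  ∀ ℓ ∈ L', (¬ ∃ z, covers T up ℓ z ∧ T.anc v z ∧ z ≠ v ∧ up z = true) ∨
    (∀ z, covers T up ℓ z → T.anc v z ∧ z ≠ v)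

/-- `v` is down-independent w.r.t. the link set `L'`. -/
def downIndep (T : ArcTree V) (up : V → Bool) (L' : Set (V × V)) (v : V) : Prop :=
  ∀ ℓ ∈ L', (¬ ∃ z, covers T up ℓ z ∧ T.anc v z ∧ z ≠ v ∧ up z = false) ∨
    (∀ z, covers T up ℓ z → T.anc v z ∧ z ≠ v)

/-- A feasible (integral) solution: every arc is covered by some link of `F`. -/
def Feasible (T : ArcTree V) (up : V → Bool) (F : Finset (V × V)) : Prop :=
  ∀ z, z ≠ T.root → ∃ ℓ ∈ F, covers T up ℓ z

/-- `F` is shadow-minimal: no link of `F` can be replaced by a proper shadow while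
maintaining feasibility. -/
def ShadowMinimal (T : ArcTree V) (up : V → Bool) (F : Finset (V × V)) : Prop :=
  ∀ ℓ ∈ F, ∀ ℓ' : V × V, IsShadow T ℓ ℓ' → ℓ' ≠ ℓ →
    ¬ Feasible T up (insert ℓ' (F.erase ℓ))

/-- A splitting of the link set: each link is mapped to a set of shadows whose tree
paths partition the arc set of its tree path. -/
def IsSplitting (T : ArcTree V) (σ : V × V → Finset (V × V)) : Prop :=
  ∀ ℓ : V × V,
    (σ ℓ).Nonempty ∧
    (∀ ℓ' ∈ σ ℓ, IsShadow T ℓ ℓ' ∧ (ℓ'.1 ≠ ℓ'.2 ∨ ℓ' = ℓ)) ∧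
    (∀ z, T.arcOnPath ℓ.1 ℓ.2 z ↔ ∃ ℓ' ∈ σ ℓ, T.arcOnPath ℓ'.1 ℓ'.2 z) ∧
    (∀ ℓ₁ ∈ σ ℓ, ∀ ℓ₂ ∈ σ ℓ, ℓ₁ ≠ ℓ₂ →
      ∀ z, T.arcOnPath ℓ₁.1 ℓ₁.2 z → ¬ T.arcOnPath ℓ₂.1 ℓ₂.2 z)

/-- The LP solution obtained from `x` by applying the splitting `σ`. -/
noncomputable def splitSol [Fintype V] (σ : V × V → Finset (V × V)) (x : V × V → ℝ) :
    V × V → ℝ :=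
  fun ℓ' => ∑ ℓ : V × V, if ℓ' ∈ σ ℓ then x ℓ else 0

/-- `x` is a feasible solution of the WDTAP set-covering LP. -/
def FeasLP [Fintype V] (T : ArcTree V) (up : V → Bool) (x : V × V → ℝ) : Prop :=
  (∀ ℓ, 0 ≤ x ℓ) ∧
    ∀ z, z ≠ T.root → 1 ≤ ∑ ℓ : V × V, if covers T up ℓ z then x ℓ else 0

end Cover

section Aux

variable {V : Type*}

lemma anc_trans {T : ArcTree V} {a b c : V} (h1 : T.anc a b) (h2 : T.anc b c) :
    T.anc a c := by
  obtain ⟨n, hn⟩ := h1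
  obtain ⟨m, hm⟩ := h2
  exact ⟨n + m, by rw [Function.iterate_add_apply, hm, hn]⟩

/-- Transfer of ancestry of arc endpoints under shadows, for arcs lying on both paths. -/
lemma shadow_anc_transfer {T : ArcTree V} {ℓ ℓ' : V × V}
    (hs : IsShadow T ℓ ℓ') {z : V}
    (hz' : ¬ (T.anc z ℓ'.1 ↔ T.anc z ℓ'.2))
    (hz : ¬ (T.anc z ℓ.1 ↔ T.anc z ℓ.2)) :
    (T.anc z ℓ.1 ↔ T.anc z ℓ'.1) ∧ (T.anc z ℓ.2 ↔ T.anc z ℓ'.2) := by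
  by_cases h1 : T.anc z ℓ'.1
  · have h2 : ¬ T.anc z ℓ'.2 := fun h => hz' ⟨fun _ => h, fun _ => h1⟩
    have hw : ¬ T.anc z ℓ.2 := fun hw => h2 (hs.2.2 z h1 hw)
    have hu : T.anc z ℓ.1 := by tauto
    exact ⟨⟨fun _ => h1, fun _ => hu⟩, ⟨fun h => absurd h hw, fun h => absurd h h2⟩⟩
  · have h2 : T.anc z ℓ'.2 := by tauto
    have hw : T.anc z ℓ.2 := by
      rcases hs.2.1 with hc | hc
      · exact absurd (anc_trans h2 hc) h1
      · exact anc_trans h2 hc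
    have hu : ¬ T.anc z ℓ.1 := fun h => hz ⟨fun _ => hw, fun _ => h⟩
    exact ⟨⟨fun h => absurd h hu, fun h => absurd h h1⟩, ⟨fun _ => h2, fun _ => hw⟩⟩

lemma shadow_onPath {T : ArcTree V} {ℓ ℓ' : V × V} (hs : IsShadow T ℓ ℓ')
    {v : V} (hv : T.onPath ℓ'.1 ℓ'.2 v) : T.onPath ℓ.1 ℓ.2 v := by
  constructor
  · rcases hv.1 with h | h
    · rcases hs.1.1 with hc | hc
      · exact Or.inl (anc_trans h hc)
      · exact Or.inr (anc_trans h hc)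
    · rcases hs.2.1 with hc | hc
      · rcases hs.1.1 with hd | hd
        · exact Or.inl (anc_trans (anc_trans h hc) hd)
        · exact Or.inr (anc_trans (anc_trans h hc) hd)
      · exact Or.inr (anc_trans h hc)
  · intro y hyu hyw
    exact hv.2 y (hs.1.2 y hyu hyw) (hs.2.2 y (hs.1.2 y hyu hyw) hyw)

lemma covers_arcOnPath {T : ArcTree V} {up : V → Bool} {ℓ : V × V} {z : V}
    (h : covers T up ℓ z) : T.arcOnPath ℓ.1 ℓ.2 z := by
  refine ⟨h.1, ?_⟩
  rcases h.2 with ⟨h1, h2, _⟩ | ⟨h1, h2, _⟩ <;> tauto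

lemma covers_of_shadow {T : ArcTree V} {up : V → Bool} {ℓ ℓ' : V × V} {z : V}
    (hs : IsShadow T ℓ ℓ') (honℓ : T.arcOnPath ℓ.1 ℓ.2 z)
    (hc : covers T up ℓ' z) : covers T up ℓ z := by
  have ht := shadow_anc_transfer hs (covers_arcOnPath hc).2 honℓ.2
  refine ⟨hc.1, ?_⟩
  rcases hc.2 with ⟨h1, h2, h3⟩ | ⟨h1, h2, h3⟩
  · exact Or.inl ⟨ht.2.mpr h1, fun h => h2 (ht.1.mp h), h3⟩
  · exact Or.inr ⟨ht.1.mpr h1, fun h => h2 (ht.2.mp h), h3⟩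

end Aux

/-- Splitting cannot create visibility: every arc visible to a vertex
w.r.t. the support of the split solution is visible w.r.t. the support of the original
solution. Consequently, the visible up-width and down-width of every vertex cannot
increase under splitting. -/
theorem split_preserves_invisibility {V : Type*} [Fintype V]
    (T : ArcTree V) (up : V → Bool)
    (x : V × V → ℝ) (hx : FeasLP T up x)
    (σ : V × V → Finset (V × V)) (hσ : IsSplitting T σ) :
    (∀ v z : V,
      visibleArc T up {ℓ | 0 < splitSol σ x ℓ} v z → visibleArc T up {ℓ | 0 < x ℓ} v z) ∧
    (∀ v : V, ∀ k : ℕ,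
      (upWidthLE T up {ℓ | 0 < x ℓ} v k → upWidthLE T up {ℓ | 0 < splitSol σ x ℓ} v k) ∧
      (downWidthLE T up {ℓ | 0 < x ℓ} v k →
        downWidthLE T up {ℓ | 0 < splitSol σ x ℓ} v k)) := by
  have main : ∀ v z : V,
      visibleArc T up {ℓ | 0 < splitSol σ x ℓ} v z →
      visibleArc T up {ℓ | 0 < x ℓ} v z := by
    intro v z hvis
    obtain ⟨hvz, hzv, ℓ', hℓ', hcov, hinner⟩ := hvis
    -- find an original link ℓ with x ℓ > 0 and ℓ' ∈ σ ℓ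
    have hpos : ∃ ℓ : V × V, ℓ' ∈ σ ℓ ∧ 0 < x ℓ := by
      by_contra h
      push_neg at h
      have hle : splitSol σ x ℓ' ≤ 0 := by
        apply Finset.sum_nonpos
        intro ℓ _
        split_ifs with hm
        · exact h ℓ hm
        · exact le_refl 0
      exact absurd hℓ' (not_lt.mpr hle)
    obtain ⟨ℓ, hmem, hxℓ⟩ := hpos
    obtain ⟨-, hshad, harcs, -⟩ := hσ ℓ
    have hsh : IsShadow T ℓ ℓ' := (hshad ℓ' hmem).1
    have htrans : ∀ w, T.arcOnPath ℓ'.1 ℓ'.2 w → T.arcOnPath ℓ.1 ℓ.2 w :=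
      fun w hw => (harcs w).mpr ⟨ℓ', hmem, hw⟩
    refine ⟨hvz, hzv, ℓ, hxℓ, ?_, ?_⟩
    · exact covers_of_shadow hsh (htrans z (covers_arcOnPath hcov)) hcov
    · obtain ⟨honP, ⟨z₁, hc₁, hp₁⟩, ⟨z₂, hc₂, hp₂⟩⟩ := hinner
      refine ⟨shadow_onPath hsh honP, ⟨z₁, ?_, ?_⟩, ⟨z₂, ?_, ?_⟩⟩
      · exact covers_of_shadow hsh (htrans z₁ (covers_arcOnPath hc₁)) hc₁
      · have ht := shadow_anc_transfer hsh (covers_arcOnPath hc₁).2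
          (htrans z₁ (covers_arcOnPath hc₁)).2
        exact ⟨hp₁.1, fun h => hp₁.2 (Iff.trans (Iff.symm ht.1) h)⟩
      · exact covers_of_shadow hsh (htrans z₂ (covers_arcOnPath hc₂)) hc₂
      · have ht := shadow_anc_transfer hsh (covers_arcOnPath hc₂).2
          (htrans z₂ (covers_arcOnPath hc₂)).2
        exact ⟨hp₂.1, fun h => hp₂.2 (Iff.trans h ht.2)⟩
  refine ⟨main, fun v k => ⟨?_, ?_⟩⟩
  · intro h S hS hSvis
    exact h S hS fun w hw => ⟨(hSvis w hw).1, main v w (hSvis w hw).2⟩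
  · intro h S hS hSvis
    exact h S hS fun w hw => ⟨(hSvis w hw).1, main v w (hSvis w hw).2⟩
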